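/- Let q* > 0 and assume 2·q*·Φ̃(α₀, ξ) < 1. Then there exists a unique continuous function u : [α₀, ξ] → ℝ satisfying the integral equation u(η) = q*·(Φ(ξ, u) − Φ(η, u)) for all η ∈ [α₀, ξ]. -/

import Mathlib

open Real MeasureTheory Set

/-- `E(η,u) = exp(−(2/a)·∫_{α₀}^{η} s·N*(u(s))/L*(u(s)) ds)` -/
noncomputable def Efun (a : ℝ) (L N : ℝ → ℝ) (α₀ : ℝ) (u : ℝ → ℝ) (η : ℝ) : ℝ :=
  Real.exp (-(2 / a) * ∫ s in α₀..η, s * N (u s) / L (u s))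

/-- `Φ(η,u) = α₀^ν·∫_{α₀}^{η} E(v,u)/(v^ν·L*(u(v))) dv` -/
noncomputable def Phi (a ν : ℝ) (L N : ℝ → ℝ) (α₀ : ℝ) (u : ℝ → ℝ) (η : ℝ) : ℝ :=
  α₀ ^ ν * ∫ v in α₀..η, Efun a L N α₀ u v / (v ^ ν * L (u v))

/-- The Lipschitz bound `Φ̃(α₀, η)` from Lemma 4. -/
noncomputable def PhiTilde (a ν Lm NM Ltil Ntil α₀ η : ℝ) : ℝ :=
  (α₀ ^ ν / Lm ^ 2) *
    ((1 / a) * (Ntil + NM * Ltil / Lm) *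
        (η ^ (3 - ν) / (3 - ν) - α₀ ^ 2 * η ^ (1 - ν) / (1 - ν) +
          2 * α₀ ^ (3 - ν) / ((3 - ν) * (1 - ν))) +
      Ltil * (η ^ (1 - ν) - α₀ ^ (1 - ν)) / (1 - ν))

theorem exp_neg_lip (x y : ℝ) (hx : 0 ≤ x) (hy : 0 ≤ y) : |Real.exp (-x) - Real.exp (-y)| ≤ |x - y| := by
  have key : ∀ s t : ℝ, 0 ≤ s → s ≤ t → Real.exp (-t) ≤ Real.exp (-s) ∧ Real.exp (-s) - Real.exp (-t) ≤ t - s := by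
    intro s t hs hst
    refine ⟨Real.exp_le_exp.2 (by linarith), ?_⟩
    have h1 : Real.exp (-s) - Real.exp (-t) = Real.exp (-s) * (1 - Real.exp (-(t - s))) := by
      rw [mul_sub, mul_one, ← Real.exp_add]; ring_nf
    have h2 : Real.exp (-s) ≤ 1 := Real.exp_le_one_iff.2 (by linarith)
    have h3 : 1 - Real.exp (-(t - s)) ≤ t - s := by
      have := Real.add_one_le_exp (-(t - s)); linarith
    have h4 : 0 ≤ 1 - Real.exp (-(t-s)) := by
      have : Real.exp (-(t-s)) ≤ 1 := Real.exp_le_one_iff.2 (by linarith)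
      linarith
    calc Real.exp (-s) - Real.exp (-t) = Real.exp (-s) * (1 - Real.exp (-(t - s))) := h1
      _ ≤ 1 * (t - s) := by apply mul_le_mul h2 h3 h4 zero_le_one
      _ = t - s := one_mul _
  rcases le_total x y with h | h
  · rw [abs_of_nonneg (by linarith [(key x y hx h).1]), abs_of_nonpos (by linarith : x - y ≤ 0)]
    linarith [(key x y hx h).2]
  · rw [abs_of_nonpos (by linarith [(key y x hy h).1]), abs_of_nonneg (by linarith : 0 ≤ x - y)]
    linarith [(key y x hy h).2]

theorem ratio_lip (L N : ℝ → ℝ) (Lm NM Ltil Ntil : ℝ)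
    (hLm : 0 < Lm) (hLt : 0 ≤ Ltil) (hL : ∀ x, Lm ≤ L x)
    (hN0 : ∀ x, 0 ≤ N x) (hNM : ∀ x, N x ≤ NM)
    (hLlip : ∀ x y : ℝ, |L x - L y| ≤ Ltil * |x - y|)
    (hNlip : ∀ x y : ℝ, |N x - N y| ≤ Ntil * |x - y|)
    (x y : ℝ) :
    |N x / L x - N y / L y| ≤ (Ntil / Lm + NM * Ltil / Lm ^ 2) * |x - y| := by
  have hLx : 0 < L x := lt_of_lt_of_le hLm (hL x)
  have hLy : 0 < L y := lt_of_lt_of_le hLm (hL y)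
  have hsplit : N x / L x - N y / L y
      = (N x - N y) / L x + N y * (L y - L x) / (L x * L y) := by
    field_simp
    ring
  rw [hsplit]
  have h1 : |(N x - N y) / L x| ≤ Ntil * |x - y| / Lm := by
    rw [abs_div, abs_of_pos hLx]
    have hNN : 0 ≤ NM := (hN0 y).trans (hNM y)
    gcongr <;> first
      | exact (abs_nonneg _).trans (hNlip x y)
      | exact hL x
      | exact hNlip x y
  have h2 : |N y * (L y - L x) / (L x * L y)| ≤ NM * (Ltil * |x - y|) / (Lm * Lm) := by
    rw [abs_div, abs_mul, abs_mul, abs_of_pos hLx, abs_of_pos hLy, abs_of_nonneg (hN0 y)]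
    have hNN : 0 ≤ NM := (hN0 y).trans (hNM y)
    have hlyx : |L y - L x| ≤ Ltil * |x - y| := (hLlip y x).trans (by rw [abs_sub_comm])
    gcongr <;> first
      | positivity
      | exact hL x
      | exact hL y
      | exact hNM y
      | exact hlyx
  calc |(N x - N y) / L x + N y * (L y - L x) / (L x * L y)|
      ≤ |(N x - N y) / L x| + |N y * (L y - L x) / (L x * L y)| := abs_add_le _ _
    _ ≤ Ntil * |x - y| / Lm + NM * (Ltil * |x - y|) / (Lm * Lm) := add_le_add h1 h2
    _ = (Ntil / Lm + NM * Ltil / Lm ^ 2) * |x - y| := by field_simp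

theorem Fcont (L N : ℝ → ℝ) (Lm : ℝ) (hLm : 0 < Lm) (hL : ∀ x, Lm ≤ L x)
    (hLcont : Continuous L) (hNcont : Continuous N) (u : ℝ → ℝ) (hu : Continuous u) :
    Continuous (fun s => s * N (u s) / L (u s)) :=
  (continuous_id.mul (hNcont.comp hu)).div (hLcont.comp hu)
    (fun s => ne_of_gt (lt_of_lt_of_le hLm (hL (u s))))

theorem Fnonneg (α₀ : ℝ) (L N : ℝ → ℝ) (Lm : ℝ) (hα₀ : 0 < α₀) (hLm : 0 < Lm)
    (hL : ∀ x, Lm ≤ L x) (hN0 : ∀ x, 0 ≤ N x) (u : ℝ → ℝ) (s : ℝ) (hs : α₀ ≤ s) :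
    0 ≤ s * N (u s) / L (u s) := by
  have h1 := lt_of_lt_of_le hLm (hL (u s))
  have h2 := hN0 (u s)
  have h3 : (0:ℝ) ≤ s := le_trans hα₀.le hs
  positivity

theorem E_le_one (a α₀ : ℝ) (L N : ℝ → ℝ) (Lm : ℝ)
    (ha : 0 < a) (hα₀ : 0 < α₀) (hLm : 0 < Lm) (hL : ∀ x, Lm ≤ L x) (hN0 : ∀ x, 0 ≤ N x)
    (u : ℝ → ℝ) (η : ℝ) (hη : α₀ ≤ η) :
    Efun a L N α₀ u η ≤ 1 := by
  rw [Efun, Real.exp_le_one_iff, neg_mul, neg_nonpos]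
  apply mul_nonneg (by positivity)
  exact intervalIntegral.integral_nonneg hη
    (fun s hs => Fnonneg α₀ L N Lm hα₀ hLm hL hN0 u s hs.1)

theorem E_diff (a α₀ : ℝ) (L N : ℝ → ℝ) (Lm NM Ltil Ntil : ℝ)
    (ha : 0 < a) (hα₀ : 0 < α₀)
    (hLm : 0 < Lm) (hLt : 0 ≤ Ltil) (hNMp : 0 ≤ NM)
    (hL : ∀ x, Lm ≤ L x) (hN0 : ∀ x, 0 ≤ N x) (hNM : ∀ x, N x ≤ NM)
    (hLcont : Continuous L) (hNcont : Continuous N)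
    (hLlip : ∀ x y : ℝ, |L x - L y| ≤ Ltil * |x - y|)
    (hNlip : ∀ x y : ℝ, |N x - N y| ≤ Ntil * |x - y|)
    (u w : ℝ → ℝ) (hu : Continuous u) (hw : Continuous w)
    (d : ℝ) (hd : 0 ≤ d) (hud : ∀ s, |u s - w s| ≤ d) (η : ℝ) (hη : α₀ ≤ η) :
    |Efun a L N α₀ u η - Efun a L N α₀ w η|
      ≤ (Ntil / Lm + NM * Ltil / Lm ^ 2) / a * d * (η ^ 2 - α₀ ^ 2) := by
  have hNtp : 0 ≤ Ntil := by
    have := (abs_nonneg (N 0 - N 1)).trans (hNlip 0 1); simpa using this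
  set CB := Ntil / Lm + NM * Ltil / Lm ^ 2 with hCB
  have hCB0 : 0 ≤ CB := by positivity
  have hFuc : Continuous (fun s => s * N (u s) / L (u s)) := Fcont L N Lm hLm hL hLcont hNcont u hu
  have hFwc : Continuous (fun s => s * N (w s) / L (w s)) := Fcont L N Lm hLm hL hLcont hNcont w hw
  have hIu : 0 ≤ ∫ s in α₀..η, s * N (u s) / L (u s) := intervalIntegral.integral_nonneg hη
    (fun s hs => Fnonneg α₀ L N Lm hα₀ hLm hL hN0 u s hs.1)
  have hIw : 0 ≤ ∫ s in α₀..η, s * N (w s) / L (w s) := intervalIntegral.integral_nonneg hη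
    (fun s hs => Fnonneg α₀ L N Lm hα₀ hLm hL hN0 w s hs.1)
  have ha' : (0:ℝ) ≤ 2 / a := by positivity
  have e1 : |Efun a L N α₀ u η - Efun a L N α₀ w η|
      ≤ |(2 / a) * (∫ s in α₀..η, s * N (u s) / L (u s))
          - (2 / a) * (∫ s in α₀..η, s * N (w s) / L (w s))| := by
    rw [Efun, Efun, neg_mul, neg_mul]
    exact exp_neg_lip _ _ (mul_nonneg ha' hIu) (mul_nonneg ha' hIw)
  have e2 : |(2 / a) * (∫ s in α₀..η, s * N (u s) / L (u s))
          - (2 / a) * (∫ s in α₀..η, s * N (w s) / L (w s))|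
      = (2 / a) * |∫ s in α₀..η, (s * N (u s) / L (u s) - s * N (w s) / L (w s))| := by
    rw [← mul_sub, abs_mul, abs_of_nonneg ha',
      intervalIntegral.integral_sub (hFuc.intervalIntegrable _ _) (hFwc.intervalIntegrable _ _)]
  have ptw : ∀ s ∈ Icc α₀ η, |s * N (u s) / L (u s) - s * N (w s) / L (w s)| ≤ CB * d * s := by
    intro s hs
    have hs0 : 0 ≤ s := le_trans hα₀.le hs.1
    have hr : s * N (u s) / L (u s) - s * N (w s) / L (w s)
        = s * (N (u s) / L (u s) - N (w s) / L (w s)) := by ring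
    rw [hr, abs_mul, abs_of_nonneg hs0]
    calc s * |N (u s) / L (u s) - N (w s) / L (w s)|
        ≤ s * (CB * |u s - w s|) := mul_le_mul_of_nonneg_left
          (ratio_lip L N Lm NM Ltil Ntil hLm hLt hL hN0 hNM hLlip hNlip (u s) (w s)) hs0
      _ ≤ s * (CB * d) := mul_le_mul_of_nonneg_left
          (mul_le_mul_of_nonneg_left (hud s) hCB0) hs0
      _ = CB * d * s := by ring
  have e3 : |∫ s in α₀..η, (s * N (u s) / L (u s) - s * N (w s) / L (w s))|
      ≤ ∫ s in α₀..η, CB * d * s := by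
    refine le_trans (intervalIntegral.abs_integral_le_integral_abs hη) ?_
    apply intervalIntegral.integral_mono_on hη
      ((hFuc.sub hFwc).abs.intervalIntegrable _ _)
      ((continuous_const.mul continuous_id).intervalIntegrable _ _)
    exact ptw
  have e4 : (∫ s in α₀..η, CB * d * s) = CB * d * ((η ^ 2 - α₀ ^ 2) / 2) := by
    rw [intervalIntegral.integral_const_mul, integral_id]
  calc |Efun a L N α₀ u η - Efun a L N α₀ w η|
      ≤ (2 / a) * |∫ s in α₀..η, (s * N (u s) / L (u s) - s * N (w s) / L (w s))| := by
        rw [← e2]; exact e1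
    _ ≤ (2 / a) * (CB * d * ((η ^ 2 - α₀ ^ 2) / 2)) := by
        rw [← e4]; exact mul_le_mul_of_nonneg_left e3 ha'
    _ = CB / a * d * (η ^ 2 - α₀ ^ 2) := by field_simp

theorem E_cont (a α₀ : ℝ) (L N : ℝ → ℝ) (Lm : ℝ) (hLm : 0 < Lm) (hL : ∀ x, Lm ≤ L x)
    (hLcont : Continuous L) (hNcont : Continuous N) (u : ℝ → ℝ) (hu : Continuous u) :
    Continuous (Efun a L N α₀ u) := by
  apply Real.continuous_exp.comp
  exact continuous_const.mul (intervalIntegral.continuous_primitive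
    (fun c b => (Fcont L N Lm hLm hL hLcont hNcont u hu).intervalIntegrable c b) α₀)

theorem g_contOn (a ν α₀ ξ : ℝ) (L N : ℝ → ℝ) (Lm : ℝ) (hα₀ : 0 < α₀)
    (hLm : 0 < Lm) (hL : ∀ x, Lm ≤ L x)
    (hLcont : Continuous L) (hNcont : Continuous N) (u : ℝ → ℝ) (hu : Continuous u) :
    ContinuousOn (fun v => Efun a L N α₀ u v / (v ^ ν * L (u v))) (Icc α₀ ξ) := by
  apply ContinuousOn.div
  · exact (E_cont a α₀ L N Lm hLm hL hLcont hNcont u hu).continuousOn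
  · apply ContinuousOn.mul _ ((hLcont.comp hu).continuousOn)
    intro v hv
    exact (Real.continuousAt_rpow_const v ν
      (Or.inl (ne_of_gt (lt_of_lt_of_le hα₀ hv.1)))).continuousWithinAt
  · intro v hv
    have hv0 : 0 < v := lt_of_lt_of_le hα₀ hv.1
    exact ne_of_gt (mul_pos (Real.rpow_pos_of_pos hv0 ν) (lt_of_lt_of_le hLm (hL (u v))))

theorem Phi_cont (a ν α₀ ξ : ℝ) (L N : ℝ → ℝ) (Lm : ℝ) (hα₀ : 0 < α₀) (hαξ : α₀ ≤ ξ)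
    (hLm : 0 < Lm) (hL : ∀ x, Lm ≤ L x)
    (hLcont : Continuous L) (hNcont : Continuous N) (u : ℝ → ℝ) (hu : Continuous u) :
    ContinuousOn (Phi a ν L N α₀ u) (Icc α₀ ξ) := by
  apply ContinuousOn.mul continuousOn_const
  have h := intervalIntegral.continuousOn_primitive_interval
    (f := fun v => Efun a L N α₀ u v / (v ^ ν * L (u v))) (a := α₀) (b := ξ) (μ := volume) ?_
  · rwa [uIcc_of_le hαξ] at h
  · rw [uIcc_of_le hαξ]
    exact (g_contOn a ν α₀ ξ L N Lm hα₀ hLm hL hLcont hNcont u hu).integrableOn_Icc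

theorem Phi_congr (a ν α₀ ξ : ℝ) (L N : ℝ → ℝ) (u w : ℝ → ℝ) (hαξ : α₀ ≤ ξ)
    (huw : EqOn u w (Icc α₀ ξ)) (η : ℝ) (hη : η ∈ Icc α₀ ξ) :
    Phi a ν L N α₀ u η = Phi a ν L N α₀ w η := by
  unfold Phi
  congr 1
  apply intervalIntegral.integral_congr
  intro v hv
  rw [uIcc_of_le hη.1] at hv
  have hvI : v ∈ Icc α₀ ξ := ⟨hv.1, hv.2.trans hη.2⟩
  have hEeq : Efun a L N α₀ u v = Efun a L N α₀ w v := by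
    unfold Efun
    congr 1
    congr 1
    apply intervalIntegral.integral_congr
    intro s hs
    rw [uIcc_of_le hv.1] at hs
    have hsI : s ∈ Icc α₀ ξ := ⟨hs.1, hs.2.trans hvI.2⟩
    show s * N (u s) / L (u s) = s * N (w s) / L (w s)
    rw [huw hsI]
  show Efun a L N α₀ u v / (v ^ ν * L (u v)) = Efun a L N α₀ w v / (v ^ ν * L (w v))
  rw [hEeq, huw hvI]

theorem rpow_intInt (α₀ ξ : ℝ) (hα₀ : 0 < α₀) (hαξ : α₀ ≤ ξ) (r : ℝ) :
    IntervalIntegrable (fun v : ℝ => v ^ r) volume α₀ ξ := by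
  apply ContinuousOn.intervalIntegrable
  intro v hv
  rw [uIcc_of_le hαξ] at hv
  exact (Real.continuousAt_rpow_const v r
    (Or.inl (ne_of_gt (lt_of_lt_of_le hα₀ hv.1)))).continuousWithinAt

set_option maxHeartbeats 1000000 in
theorem phiTilde_eq (a ν Lm NM Ltil Ntil α₀ ξ d : ℝ) (ha : a ≠ 0) (hLm : Lm ≠ 0)
    (h3 : (3:ℝ) - ν ≠ 0) (h1 : (1:ℝ) - ν ≠ 0)
    (hA : α₀ ^ ((3:ℝ) - ν) = α₀ ^ 2 * α₀ ^ ((1:ℝ) - ν)) :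
    α₀ ^ ν * ((((Ntil / Lm + NM * Ltil / Lm ^ 2) / a / Lm) * d)
        * ((ξ ^ ((3:ℝ) - ν) - α₀ ^ ((3:ℝ) - ν)) / (3 - ν))
      + ((Ltil / Lm ^ 2 - ((Ntil / Lm + NM * Ltil / Lm ^ 2) / a / Lm) * α₀ ^ 2) * d)
        * ((ξ ^ ((1:ℝ) - ν) - α₀ ^ ((1:ℝ) - ν)) / (1 - ν)))
      = PhiTilde a ν Lm NM Ltil Ntil α₀ ξ * d := by
  rw [PhiTilde, hA]
  set P := α₀ ^ ν
  set X3 := ξ ^ ((3:ℝ) - ν)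
  set X1 := ξ ^ ((1:ℝ) - ν)
  set A1 := α₀ ^ ((1:ℝ) - ν)
  field_simp
  ring

theorem Phi_lip (a ν α₀ ξ : ℝ) (L N : ℝ → ℝ) (Lm NM Ltil Ntil : ℝ)
    (ha : 0 < a) (hν0 : 0 < ν) (hν1 : ν < 1) (hα₀ : 0 < α₀) (hαξ : α₀ < ξ)
    (hLm : 0 < Lm) (hLt : 0 ≤ Ltil) (hNt : 0 ≤ Ntil) (hNMp : 0 ≤ NM)
    (hL : ∀ x, Lm ≤ L x) (hN0 : ∀ x, 0 ≤ N x) (hNM : ∀ x, N x ≤ NM)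
    (hLcont : Continuous L) (hNcont : Continuous N)
    (hLlip : ∀ x y : ℝ, |L x - L y| ≤ Ltil * |x - y|)
    (hNlip : ∀ x y : ℝ, |N x - N y| ≤ Ntil * |x - y|)
    (u w : ℝ → ℝ) (hu : Continuous u) (hw : Continuous w)
    (d : ℝ) (hd : 0 ≤ d) (hud : ∀ s, |u s - w s| ≤ d)
    (η : ℝ) (hη : η ∈ Icc α₀ ξ) :
    |Phi a ν L N α₀ u η - Phi a ν L N α₀ w η|
      ≤ PhiTilde a ν Lm NM Ltil Ntil α₀ ξ * d := by
  set CB := Ntil / Lm + NM * Ltil / Lm ^ 2 with hCB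
  have hCB0 : 0 ≤ CB := by positivity
  set c1 := CB / a / Lm with hc1
  set c2 := Ltil / Lm ^ 2 with hc2
  have hc10 : 0 ≤ c1 := by positivity
  have hc20 : 0 ≤ c2 := by positivity
  set gu := fun v => Efun a L N α₀ u v / (v ^ ν * L (u v)) with hgu
  set gw := fun v => Efun a L N α₀ w v / (v ^ ν * L (w v)) with hgw
  set Bf := fun v : ℝ => (c1 * (v ^ 2 - α₀ ^ 2) + c2) / v ^ ν * d with hBf
  have hguc : ContinuousOn gu (Icc α₀ ξ) := g_contOn a ν α₀ ξ L N Lm hα₀ hLm hL hLcont hNcont u hu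
  have hgwc : ContinuousOn gw (Icc α₀ ξ) := g_contOn a ν α₀ ξ L N Lm hα₀ hLm hL hLcont hNcont w hw
  -- pointwise bound
  have ptw : ∀ v ∈ Icc α₀ ξ, |gu v - gw v| ≤ Bf v := by
    intro v hv
    have hv0 : 0 < v := lt_of_lt_of_le hα₀ hv.1
    have hvν : 0 < v ^ ν := Real.rpow_pos_of_pos hv0 ν
    have hLu : 0 < L (u v) := lt_of_lt_of_le hLm (hL (u v))
    have hLw : 0 < L (w v) := lt_of_lt_of_le hLm (hL (w v))
    have hEw0 : 0 < Efun a L N α₀ w v := Real.exp_pos _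
    have hEw1 : Efun a L N α₀ w v ≤ 1 := E_le_one a α₀ L N Lm ha hα₀ hLm hL hN0 w v hv.1
    have hEd : |Efun a L N α₀ u v - Efun a L N α₀ w v| ≤ CB / a * d * (v ^ 2 - α₀ ^ 2) :=
      E_diff a α₀ L N Lm NM Ltil Ntil ha hα₀ hLm hLt hNMp hL hN0 hNM hLcont hNcont
        hLlip hNlip u w hu hw d hd hud v hv.1
    have hsplit : gu v - gw v
        = (Efun a L N α₀ u v - Efun a L N α₀ w v) / (v ^ ν * L (u v))
          + Efun a L N α₀ w v * (L (w v) - L (u v)) / (v ^ ν * L (u v) * L (w v)) := by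
      simp only [hgu, hgw]
      field_simp
      ring
    have h1 : |(Efun a L N α₀ u v - Efun a L N α₀ w v) / (v ^ ν * L (u v))|
        ≤ CB / a * d * (v ^ 2 - α₀ ^ 2) / (v ^ ν * Lm) := by
      rw [abs_div, abs_of_pos (mul_pos hvν hLu)]
      gcongr <;> first
        | exact (abs_nonneg _).trans hEd
        | exact hL (u v)
        | exact hEd
        | positivity
    have h2 : |Efun a L N α₀ w v * (L (w v) - L (u v)) / (v ^ ν * L (u v) * L (w v))|
        ≤ 1 * (Ltil * d) / (v ^ ν * Lm * Lm) := by
      rw [abs_div, abs_mul, abs_of_pos (mul_pos (mul_pos hvν hLu) hLw), abs_of_pos hEw0]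
      have hlwu : |L (w v) - L (u v)| ≤ Ltil * d := (hLlip (w v) (u v)).trans
        (by rw [abs_sub_comm]; exact mul_le_mul_of_nonneg_left (hud v) hLt)
      gcongr <;> first
        | positivity
        | exact hL (u v)
        | exact hL (w v)
        | exact hEw1
        | exact hlwu
    calc |gu v - gw v|
        ≤ |(Efun a L N α₀ u v - Efun a L N α₀ w v) / (v ^ ν * L (u v))|
          + |Efun a L N α₀ w v * (L (w v) - L (u v)) / (v ^ ν * L (u v) * L (w v))| := by
          rw [hsplit]; exact abs_add_le _ _
      _ ≤ CB / a * d * (v ^ 2 - α₀ ^ 2) / (v ^ ν * Lm) + 1 * (Ltil * d) / (v ^ ν * Lm * Lm) :=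
          add_le_add h1 h2
      _ = Bf v := by
          simp only [hBf, hc1, hc2]
          field_simp
  -- integrability of Bf and value of its integral
  have hBfint : IntervalIntegrable Bf volume α₀ ξ := by
    apply ContinuousOn.intervalIntegrable
    intro v hv
    rw [uIcc_of_le hαξ.le] at hv
    have hv0 : 0 < v := lt_of_lt_of_le hα₀ hv.1
    apply ContinuousWithinAt.mul _ continuousWithinAt_const
    apply ContinuousWithinAt.div
    · exact (continuous_const.mul ((continuous_pow 2).sub continuous_const)).add
        continuous_const |>.continuousWithinAt
    · exact (Real.continuousAt_rpow_const v ν (Or.inl hv0.ne')).continuousWithinAt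
    · exact (Real.rpow_pos_of_pos hv0 ν).ne'
  have hBfnn : ∀ v ∈ Ioc α₀ ξ, 0 ≤ Bf v := by
    intro v hv
    have hv0 : 0 < v := hα₀.trans hv.1
    have : α₀ ^ 2 ≤ v ^ 2 := by nlinarith [hv.1.le]
    have hvν : 0 < v ^ ν := Real.rpow_pos_of_pos hv0 ν
    simp only [hBf]
    apply mul_nonneg _ hd
    apply div_nonneg _ hvν.le
    nlinarith
  -- the chain
  have hαν : 0 < α₀ ^ ν := Real.rpow_pos_of_pos hα₀ ν
  have hguInt : IntervalIntegrable gu volume α₀ η := by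
    apply ContinuousOn.intervalIntegrable
    rw [uIcc_of_le hη.1]
    exact hguc.mono (Icc_subset_Icc le_rfl hη.2)
  have hgwInt : IntervalIntegrable gw volume α₀ η := by
    apply ContinuousOn.intervalIntegrable
    rw [uIcc_of_le hη.1]
    exact hgwc.mono (Icc_subset_Icc le_rfl hη.2)
  have step1 : |Phi a ν L N α₀ u η - Phi a ν L N α₀ w η|
      = α₀ ^ ν * |∫ v in α₀..η, (gu v - gw v)| := by
    rw [Phi, Phi, ← mul_sub, abs_mul, abs_of_pos hαν,
      intervalIntegral.integral_sub hguInt hgwInt]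
  have hBfint' : IntervalIntegrable Bf volume α₀ η := by
    apply hBfint.mono_set
    rw [uIcc_of_le hη.1, uIcc_of_le hαξ.le]
    exact Icc_subset_Icc le_rfl hη.2
  have step2 : |∫ v in α₀..η, (gu v - gw v)| ≤ ∫ v in α₀..η, Bf v := by
    refine le_trans (intervalIntegral.abs_integral_le_integral_abs hη.1) ?_
    apply intervalIntegral.integral_mono_on hη.1 ((hguInt.sub hgwInt).abs) hBfint'
    intro v hv
    exact ptw v ⟨hv.1, hv.2.trans hη.2⟩
  have step3 : (∫ v in α₀..η, Bf v) ≤ ∫ v in α₀..ξ, Bf v :=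
    intervalIntegral.integral_mono_interval le_rfl hη.1 hη.2
      ((ae_restrict_iff' measurableSet_Ioc).2 (Filter.Eventually.of_forall hBfnn)) hBfint
  -- compute the integral of Bf
  have h3 : (3:ℝ) - ν ≠ 0 := by linarith
  have h1 : (1:ℝ) - ν ≠ 0 := by linarith
  have hexp2 : EqOn Bf
      (fun v => (c1 * d) * v ^ ((2:ℝ) - ν) + ((c2 - c1 * α₀ ^ 2) * d) * v ^ (-ν))
      (uIcc α₀ ξ) := by
    intro v hv
    rw [uIcc_of_le hαξ.le] at hv
    have hv0 : 0 < v := lt_of_lt_of_le hα₀ hv.1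
    have hvν : 0 < v ^ ν := Real.rpow_pos_of_pos hv0 ν
    have hr1 : v ^ ((2:ℝ) - ν) = v ^ 2 / v ^ ν := by
      rw [Real.rpow_sub hv0]
      congr 1
      rw [show ((2:ℝ) = ((2:ℕ):ℝ)) by norm_num, Real.rpow_natCast]
    have hr2 : v ^ (-ν) = 1 / v ^ ν := by
      rw [Real.rpow_neg hv0.le, one_div]
    simp only [hBf]
    rw [hr1, hr2]
    field_simp
    ring
  have hval : (∫ v in α₀..ξ, Bf v)
      = (c1 * d) * ((ξ ^ ((3:ℝ) - ν) - α₀ ^ ((3:ℝ) - ν)) / (3 - ν))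
        + ((c2 - c1 * α₀ ^ 2) * d) * ((ξ ^ ((1:ℝ) - ν) - α₀ ^ ((1:ℝ) - ν)) / (1 - ν)) := by
    rw [intervalIntegral.integral_congr hexp2,
      intervalIntegral.integral_add
        ((rpow_intInt α₀ ξ hα₀ hαξ.le _).const_mul _)
        ((rpow_intInt α₀ ξ hα₀ hαξ.le _).const_mul _),
      intervalIntegral.integral_const_mul, intervalIntegral.integral_const_mul,
      integral_rpow (Or.inl (by linarith : (-1:ℝ) < 2 - ν)),
      integral_rpow (Or.inl (by linarith : (-1:ℝ) < -ν)),
      show (2:ℝ) - ν + 1 = 3 - ν by ring, show -ν + 1 = (1:ℝ) - ν by ring]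
  have hA : α₀ ^ ((3:ℝ) - ν) = α₀ ^ 2 * α₀ ^ ((1:ℝ) - ν) := by
    rw [show ((3:ℝ) - ν) = 2 + (1 - ν) by ring, Real.rpow_add hα₀]
    congr 1
    rw [show ((2:ℝ) = ((2:ℕ):ℝ)) by norm_num, Real.rpow_natCast]
  have hfinal : α₀ ^ ν * ((c1 * d) * ((ξ ^ ((3:ℝ) - ν) - α₀ ^ ((3:ℝ) - ν)) / (3 - ν))
        + ((c2 - c1 * α₀ ^ 2) * d) * ((ξ ^ ((1:ℝ) - ν) - α₀ ^ ((1:ℝ) - ν)) / (1 - ν)))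
      = PhiTilde a ν Lm NM Ltil Ntil α₀ ξ * d := by
    rw [hc1, hc2, hCB]
    exact phiTilde_eq a ν Lm NM Ltil Ntil α₀ ξ d ha.ne' hLm.ne' h3 h1 hA
  calc |Phi a ν L N α₀ u η - Phi a ν L N α₀ w η|
      = α₀ ^ ν * |∫ v in α₀..η, (gu v - gw v)| := step1
    _ ≤ α₀ ^ ν * ∫ v in α₀..ξ, Bf v :=
        mul_le_mul_of_nonneg_left (step2.trans step3) hαν.le
    _ = PhiTilde a ν Lm NM Ltil Ntil α₀ ξ * d := by rw [hval]; exact hfinal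

theorem stmt_6 (a ν α₀ ξ : ℝ) (L N : ℝ → ℝ) (Lm LM Nm NM Ltil Ntil q : ℝ)
    (ha : 0 < a) (hν0 : 0 < ν) (hν1 : ν < 1) (hα₀ : 0 < α₀) (hαξ : α₀ < ξ)
    (hq : 0 < q)
    (hLcont : Continuous L) (hNcont : Continuous N)
    (hLm : 0 < Lm) (hNm : 0 < Nm) (hLtil : 0 < Ltil) (hNtil : 0 < Ntil)
    (hL : ∀ x : ℝ, Lm ≤ L x ∧ L x ≤ LM)
    (hN : ∀ x : ℝ, Nm ≤ N x ∧ N x ≤ NM)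
    (hLlip : ∀ x y : ℝ, |L x - L y| ≤ Ltil * |x - y|)
    (hNlip : ∀ x y : ℝ, |N x - N y| ≤ Ntil * |x - y|)
    (hcontr : 2 * q * PhiTilde a ν Lm NM Ltil Ntil α₀ ξ < 1) :
    ∃ u : ℝ → ℝ,
      (ContinuousOn u (Icc α₀ ξ) ∧
        ∀ η ∈ Icc α₀ ξ, u η = q * (Phi a ν L N α₀ u ξ - Phi a ν L N α₀ u η)) ∧
      ∀ v : ℝ → ℝ, ContinuousOn v (Icc α₀ ξ) →
        (∀ η ∈ Icc α₀ ξ, v η = q * (Phi a ν L N α₀ v ξ - Phi a ν L N α₀ v η)) →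
        EqOn v u (Icc α₀ ξ) := by
  have hle : α₀ ≤ ξ := hαξ.le
  have hL' : ∀ x, Lm ≤ L x := fun x => (hL x).1
  have hN0 : ∀ x, 0 ≤ N x := fun x => hNm.le.trans (hN x).1
  have hNM' : ∀ x, N x ≤ NM := fun x => (hN x).2
  have hNMp : 0 ≤ NM := (hN0 0).trans (hNM' 0)
  have hPT0 : 0 ≤ PhiTilde a ν Lm NM Ltil Ntil α₀ ξ := by
    have h := Phi_lip a ν α₀ ξ L N Lm NM Ltil Ntil ha hν0 hν1 hα₀ hαξ hLm hLtil.le hNtil.le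
      hNMp hL' hN0 hNM' hLcont hNcont hLlip hNlip (fun _ => 0) (fun _ => 1)
      continuous_const continuous_const 1 zero_le_one (fun s => by norm_num)
      α₀ (left_mem_Icc.2 hle)
    nlinarith [abs_nonneg (Phi a ν L N α₀ (fun _ => 0) α₀ - Phi a ν L N α₀ (fun _ => 1) α₀)]
  haveI : Nonempty (Icc α₀ ξ) := ⟨⟨α₀, left_mem_Icc.2 hle⟩⟩
  set PT := PhiTilde a ν Lm NM Ltil Ntil α₀ ξ with hPT
  -- the fixed point operator
  have extc : ∀ f : C(Icc α₀ ξ, ℝ), Continuous (IccExtend hle f) :=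
    fun f => f.continuous.Icc_extend'
  set T : C(Icc α₀ ξ, ℝ) → C(Icc α₀ ξ, ℝ) := fun f =>
    ⟨fun x => q * (Phi a ν L N α₀ (IccExtend hle f) ξ - Phi a ν L N α₀ (IccExtend hle f) x),
      by
        apply continuous_const.mul
        apply continuous_const.sub
        exact (Phi_cont a ν α₀ ξ L N Lm hα₀ hle hLm hL' hLcont hNcont _ (extc f)).restrict⟩
    with hT
  set K : NNReal := Real.toNNReal (2 * q * PT) with hK
  have hKc : (K : ℝ) = max (2 * q * PT) 0 := Real.coe_toNNReal' _
  have hlip : LipschitzWith K T := by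
    apply LipschitzWith.of_dist_le_mul
    intro f g
    refine (ContinuousMap.dist_le (mul_nonneg K.2 dist_nonneg)).2 ?_
    intro x
    have hud : ∀ s : ℝ, |IccExtend hle f s - IccExtend hle g s| ≤ dist f g := by
      intro s
      rw [IccExtend_apply, IccExtend_apply, ← Real.dist_eq]
      exact ContinuousMap.dist_apply_le_dist _
    have hb := fun (η : ℝ) (hη : η ∈ Icc α₀ ξ) =>
      Phi_lip a ν α₀ ξ L N Lm NM Ltil Ntil ha hν0 hν1 hα₀ hαξ hLm hLtil.le hNtil.le
        hNMp hL' hN0 hNM' hLcont hNcont hLlip hNlip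
        (IccExtend hle f) (IccExtend hle g) (extc f) (extc g)
        (dist f g) dist_nonneg hud η hη
    have h1 := hb ξ (right_mem_Icc.2 hle)
    have h2 := hb (x : ℝ) x.2
    have : dist (T f x) (T g x)
        = |q| * |(Phi a ν L N α₀ (IccExtend hle f) ξ - Phi a ν L N α₀ (IccExtend hle g) ξ)
            - (Phi a ν L N α₀ (IccExtend hle f) x - Phi a ν L N α₀ (IccExtend hle g) x)| := by
      rw [Real.dist_eq, ← abs_mul]
      congr 1
      simp only [hT, ContinuousMap.coe_mk]
      ring
    rw [this, abs_of_pos hq]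
    calc q * |(Phi a ν L N α₀ (IccExtend hle f) ξ - Phi a ν L N α₀ (IccExtend hle g) ξ)
            - (Phi a ν L N α₀ (IccExtend hle f) x - Phi a ν L N α₀ (IccExtend hle g) x)|
        ≤ q * (PT * dist f g + PT * dist f g) := by
          apply mul_le_mul_of_nonneg_left _ hq.le
          exact (abs_sub _ _).trans (add_le_add h1 h2)
      _ = (2 * q * PT) * dist f g := by ring
      _ ≤ (K : ℝ) * dist f g :=
          mul_le_mul_of_nonneg_right (hKc ▸ le_max_left _ _) dist_nonneg
  have hK1 : K < 1 := by
    rw [hK, ← Real.toNNReal_one]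
    exact (Real.toNNReal_lt_toNNReal_iff one_pos).2 hcontr
  have hCW : ContractingWith K T := ⟨hK1, hlip⟩
  set fp := hCW.fixedPoint with hfp
  have hfix : T fp = fp := hCW.fixedPoint_isFixedPt
  refine ⟨IccExtend hle fp, ⟨(extc fp).continuousOn, ?_⟩, ?_⟩
  · intro η hη
    have h1 : IccExtend hle fp η = fp ⟨η, hη⟩ := IccExtend_of_mem hle fp hη
    rw [h1]
    conv_lhs => rw [← hfix]
    rfl
  · intro v hvcont hveq
    set g : C(Icc α₀ ξ, ℝ) := ⟨(Icc α₀ ξ).restrict v, hvcont.restrict⟩ with hg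
    have hvg : EqOn (IccExtend hle g) v (Icc α₀ ξ) := by
      intro s hs
      rw [IccExtend_of_mem hle g hs]
      rfl
    have hgfix : Function.IsFixedPt T g := by
      apply ContinuousMap.ext
      intro x
      show q * (Phi a ν L N α₀ (IccExtend hle g) ξ - Phi a ν L N α₀ (IccExtend hle g) x) = g x
      rw [Phi_congr a ν α₀ ξ L N _ _ hle hvg ξ (right_mem_Icc.2 hle),
        Phi_congr a ν α₀ ξ L N _ _ hle hvg (x : ℝ) x.2]
      exact (hveq (x : ℝ) x.2).symm
    have hgu : g = fp := hCW.fixedPoint_unique hgfix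
    intro η hη
    rw [IccExtend_of_mem hle fp hη, ← hgu]
    rfl
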